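/- Let p be an odd prime, G = GL₂(F_p), and V = V(α,β) the principal series representation π(α,β) with α ≠ β, of dimension p+1. Let T be the diagonal torus and T' a non-split torus. Then dim V^T = dim V^{T'} = δ(αβ, 1). -/

import Mathlib

open Module Matrix

variable (p : ℕ) [Fact p.Prime]

/-- The Borel subgroup `B₊` of upper triangular matrices in `GL₂(𝔽_p)`. -/
def Bplus : Subgroup (GL (Fin 2) (ZMod p)) where
  carrier := {g | (g : Matrix (Fin 2) (Fin 2) (ZMod p)) 1 0 = 0}
  one_mem' := by simp [Matrix.one_apply]
  mul_mem' := by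
    intro a b ha hb
    simp only [Set.mem_setOf_eq, Units.val_mul, Matrix.mul_apply, Fin.sum_univ_two] at *
    simp [ha, hb]
  inv_mem' := by
    intro a ha
    simp only [Set.mem_setOf_eq] at *
    rw [Matrix.coe_units_inv, Matrix.inv_def]
    simp [Matrix.adjugate_fin_two, ha]

/-- The Borel subgroup `B₋` of lower triangular matrices in `GL₂(𝔽_p)`. -/
def Bminus : Subgroup (GL (Fin 2) (ZMod p)) where
  carrier := {g | (g : Matrix (Fin 2) (Fin 2) (ZMod p)) 0 1 = 0}
  one_mem' := by simp [Matrix.one_apply]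
  mul_mem' := by
    intro a b ha hb
    simp only [Set.mem_setOf_eq, Units.val_mul, Matrix.mul_apply, Fin.sum_univ_two] at *
    simp [ha, hb]
  inv_mem' := by
    intro a ha
    simp only [Set.mem_setOf_eq] at *
    rw [Matrix.coe_units_inv, Matrix.inv_def]
    simp [Matrix.adjugate_fin_two, ha]

/-- The split maximal torus `T = B₊ ∩ B₋` of diagonal matrices in `GL₂(𝔽_p)`. -/
def Tsplit : Subgroup (GL (Fin 2) (ZMod p)) := Bplus p ⊓ Bminus p

/-- The embedding `𝔽_{p²}^× → GL₂(𝔽_p)` given by a choice of an `𝔽_p`-basis `b`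
of `𝔽_{p²}` (each `z` acts by multiplication on `𝔽_{p²} ≅ 𝔽_p²`). -/
noncomputable def torusHom (b : Basis (Fin 2) (ZMod p) (GaloisField p 2)) :
    (GaloisField p 2)ˣ →* GL (Fin 2) (ZMod p) :=
  Units.map (((LinearMap.toMatrixAlgEquiv b).toAlgHom.comp
    (Algebra.lmul (ZMod p) (GaloisField p 2))).toRingHom.toMonoidHom)

/-- The non-split maximal torus `T' ≅ 𝔽_{p²}^×`. -/
noncomputable def Tnonsplit (b : Basis (Fin 2) (ZMod p) (GaloisField p 2)) :
    Subgroup (GL (Fin 2) (ZMod p)) := (torusHom p b).range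

/-- The diagonal matrix `diag(x,y)` as an element of `GL₂(R)`. -/
def diagGL {R : Type*} [CommRing R] (x y : Rˣ) : GL (Fin 2) R :=
  ⟨Matrix.diagonal ![(x : R), y], Matrix.diagonal ![((x⁻¹ : Rˣ) : R), ((y⁻¹ : Rˣ) : R)],
   by
    rw [Matrix.diagonal_mul_diagonal]
    convert Matrix.diagonal_one with i
    fin_cases i <;> simp,
   by
    rw [Matrix.diagonal_mul_diagonal]
    convert Matrix.diagonal_one with i
    fin_cases i <;> simp⟩

/-! ### Auxiliary lemmas -/

open scoped Classical in
lemma avg_finrank_invariants {G : Type} [Group G] [Fintype G]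
    (V : Type) [AddCommGroup V] [Module (AlgebraicClosure ℚ) V]
    [FiniteDimensional (AlgebraicClosure ℚ) V]
    (ρ : Representation (AlgebraicClosure ℚ) G V) :
    (finrank (AlgebraicClosure ℚ) ρ.invariants : AlgebraicClosure ℚ)
      = ⅟ (Fintype.card G : AlgebraicClosure ℚ) •
        ∑ g : G, LinearMap.trace (AlgebraicClosure ℚ) V (ρ g) := by
  have h := FDRep.average_char_eq_finrank_invariants (FDRep.of ρ)
  rw [show (FDRep.of ρ).ρ = ρ from FDRep.of_ρ' ρ] at h
  rw [← h, invOf_eq_inv, smul_eq_mul, Nat.card_eq_fintype_card]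
  rfl

lemma diagGL_inj {R : Type*} [CommRing R] {x y x' y' : Rˣ} (h : diagGL x y = diagGL x' y') :
    x = x' ∧ y = y' := by
  have := congrArg (fun g : GL (Fin 2) R => (g : Matrix (Fin 2) (Fin 2) R)) h
  constructor
  · ext; exact congrFun (congrFun this 0) 0
  · ext; exact congrFun (congrFun this 1) 1

lemma eq_diag_of (g : GL (Fin 2) (ZMod p))
    (h1 : (g : Matrix (Fin 2) (Fin 2) (ZMod p)) 1 0 = 0)
    (h2 : (g : Matrix (Fin 2) (Fin 2) (ZMod p)) 0 1 = 0) :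
    ∃ x y : (ZMod p)ˣ, g = diagGL x y := by
  have hdet : IsUnit ((g : Matrix (Fin 2) (Fin 2) (ZMod p)).det) :=
    (Matrix.isUnit_iff_isUnit_det _).1 g.isUnit
  rw [Matrix.det_fin_two, h1, h2] at hdet
  simp only [mul_zero, sub_zero] at hdet
  have hx : IsUnit ((g : Matrix (Fin 2) (Fin 2) (ZMod p)) 0 0) := isUnit_of_mul_isUnit_left hdet
  have hy : IsUnit ((g : Matrix (Fin 2) (Fin 2) (ZMod p)) 1 1) :=
    isUnit_of_mul_isUnit_left (by rwa [mul_comm] at hdet)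
  refine ⟨hx.unit, hy.unit, Units.ext ?_⟩
  show (g : Matrix (Fin 2) (Fin 2) (ZMod p)) = _
  ext i j
  fin_cases i <;> fin_cases j <;>
    simp [diagGL, Matrix.diagonal, h1, h2]

lemma mem_Tsplit_iff (g : GL (Fin 2) (ZMod p)) :
    g ∈ Tsplit p ↔ ∃ x y : (ZMod p)ˣ, g = diagGL x y := by
  constructor
  · rintro ⟨h1, h2⟩
    exact eq_diag_of p g h1 h2
  · rintro ⟨x, y, rfl⟩
    constructor
    · show (Matrix.diagonal ![(x : ZMod p), y]) 1 0 = 0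
      simp [Matrix.diagonal]
    · show (Matrix.diagonal ![(x : ZMod p), y]) 0 1 = 0
      simp [Matrix.diagonal]

noncomputable def tsplitEquiv : ((ZMod p)ˣ × (ZMod p)ˣ) ≃ Tsplit p :=
  Equiv.ofBijective
    (fun xy => ⟨diagGL xy.1 xy.2, (mem_Tsplit_iff p _).2 ⟨xy.1, xy.2, rfl⟩⟩)
    ⟨by
      rintro ⟨x, y⟩ ⟨x', y'⟩ h
      obtain ⟨h1, h2⟩ := diagGL_inj (Subtype.ext_iff.1 h)
      exact Prod.ext h1 h2,
     by
      rintro ⟨g, hg⟩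
      obtain ⟨x, y, rfl⟩ := (mem_Tsplit_iff p g).1 hg
      exact ⟨(x, y), rfl⟩⟩

lemma torusHom_inj (b : Basis (Fin 2) (ZMod p) (GaloisField p 2)) :
    Function.Injective (torusHom p b) := by
  apply Units.map_injective
  exact RingHom.injective (((LinearMap.toMatrixAlgEquiv b).toAlgHom.comp
    (Algebra.lmul (ZMod p) (GaloisField p 2))).toRingHom)

open Polynomial in
lemma frob_fixed (z : GaloisField p 2) (hz : z ^ p = z) :
    ∃ x : ZMod p, algebraMap (ZMod p) (GaloisField p 2) x = z := by
  classical
  have hp1 : 1 < p := (Fact.out : p.Prime).one_lt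
  have hne : (X ^ p - X : (GaloisField p 2)[X]) ≠ 0 :=
    FiniteField.X_pow_card_sub_X_ne_zero _ hp1
  set T := (X ^ p - X : (GaloisField p 2)[X]).roots.toFinset with hT
  have hcardT : T.card ≤ p := by
    calc T.card ≤ Multiset.card (X ^ p - X : (GaloisField p 2)[X]).roots :=
          Multiset.toFinset_card_le _
      _ ≤ (X ^ p - X : (GaloisField p 2)[X]).natDegree := Polynomial.card_roots' _
      _ = p := FiniteField.X_pow_card_sub_X_natDegree_eq _ hp1
  have hsub : (Finset.univ.image (algebraMap (ZMod p) (GaloisField p 2))) ⊆ T := by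
    intro w hw
    obtain ⟨x, -, rfl⟩ := Finset.mem_image.1 hw
    rw [hT, Multiset.mem_toFinset, mem_roots hne]
    simp [Polynomial.IsRoot, sub_eq_zero, ← map_pow, ZMod.pow_card]
  have hinj : Function.Injective (algebraMap (ZMod p) (GaloisField p 2)) :=
    (algebraMap (ZMod p) (GaloisField p 2)).injective
  have hcardim : (Finset.univ.image (algebraMap (ZMod p) (GaloisField p 2))).card = p := by
    rw [Finset.card_image_of_injective _ hinj, Finset.card_univ, ZMod.card]
  have heq : (Finset.univ.image (algebraMap (ZMod p) (GaloisField p 2))) = T :=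
    Finset.eq_of_subset_of_card_le hsub (by omega)
  have hzT : z ∈ T := by
    rw [hT, Multiset.mem_toFinset, mem_roots hne]
    simp [Polynomial.IsRoot, sub_eq_zero, hz]
  rw [← heq] at hzT
  obtain ⟨x, -, hx⟩ := Finset.mem_image.1 hzT
  exact ⟨x, hx⟩

lemma torusHom_scalar (b : Basis (Fin 2) (ZMod p) (GaloisField p 2)) (x : (ZMod p)ˣ) :
    torusHom p b (Units.map (algebraMap (ZMod p) (GaloisField p 2)).toMonoidHom x)
      = diagGL x x := by
  apply Units.ext
  show (LinearMap.toMatrixAlgEquiv b) (Algebra.lmul (ZMod p) (GaloisField p 2)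
    (algebraMap (ZMod p) (GaloisField p 2) (x : ZMod p))) = Matrix.diagonal ![(x : ZMod p), x]
  have h1 : Algebra.lmul (ZMod p) (GaloisField p 2)
      (algebraMap (ZMod p) (GaloisField p 2) (x : ZMod p)) = (x : ZMod p) • LinearMap.id := by
    ext w
    simp [Algebra.smul_def]
  rw [h1, _root_.map_smul]
  have h2 : (LinearMap.toMatrixAlgEquiv b) LinearMap.id = 1 := by
    simp [LinearMap.toMatrixAlgEquiv]
  rw [h2]
  ext i j
  fin_cases i <;> fin_cases j <;> simp [Matrix.diagonal, Matrix.smul_apply, Matrix.one_apply]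

noncomputable def tnsEquiv (b : Basis (Fin 2) (ZMod p) (GaloisField p 2)) :
    (GaloisField p 2)ˣ ≃ Tnonsplit p b :=
  Equiv.ofBijective (fun z => (⟨torusHom p b z, ⟨z, rfl⟩⟩ : Tnonsplit p b))
    ⟨fun z w h => torusHom_inj p b (congrArg Subtype.val h), by
      rintro ⟨g, z, rfl⟩
      exact ⟨z, rfl⟩⟩

lemma tnsEquiv_coe (b : Basis (Fin 2) (ZMod p) (GaloisField p 2)) (z : (GaloisField p 2)ˣ) :
    ((tnsEquiv p b z : Tnonsplit p b) : GL (Fin 2) (ZMod p)) = torusHom p b z := rfl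

open scoped Classical in
/-- Sum of a character of `(ZMod p)ˣ` valued in `AlgebraicClosure ℚ`. -/
lemma sum_char (γ : (ZMod p)ˣ →* (AlgebraicClosure ℚ)ˣ) :
    ∑ x : (ZMod p)ˣ, ((γ x : AlgebraicClosure ℚ))
      = if (∀ x, (γ x : AlgebraicClosure ℚ) = 1) then ((p : AlgebraicClosure ℚ) - 1) else 0 := by
  have := sum_hom_units ((Units.coeHom (AlgebraicClosure ℚ)).comp γ)
  simp only [MonoidHom.coe_comp, Function.comp_apply, Units.coeHom_apply] at this
  rw [this]
  have hcond : ((Units.coeHom (AlgebraicClosure ℚ)).comp γ = 1)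
      ↔ (∀ x, (γ x : AlgebraicClosure ℚ) = 1) := by
    constructor
    · intro h x
      exact DFunLike.congr_fun h x
    · intro h
      ext x
      exact h x
  have hcard : ((Fintype.card (ZMod p)ˣ : ℕ) : AlgebraicClosure ℚ)
      = (p : AlgebraicClosure ℚ) - 1 := by
    rw [ZMod.card_units_eq_totient, Nat.totient_prime Fact.out,
      Nat.cast_sub (Fact.out : p.Prime).one_le]
    simp
  split_ifs with h1 h2 h2
  · exact hcard
  · exact absurd (hcond.1 h1) h2
  · exact absurd (hcond.2 h2) h1
  · exact Nat.cast_zero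

set_option maxHeartbeats 1000000 in
open scoped Classical in
/-- For the principal series representation `V = π(α,β)` of `GL₂(𝔽_p)` (`p` odd, `α ≠ β`),
the split torus `T` and a non-split torus `T'`, one has
`dim V^T = dim V^{T'} = δ(αβ, 1)`.

The representation is encoded by its character values on `T` and `T'` (see the character
table): `χ(diag(x,x)) = (p+1)α(x)β(x)`, `χ(diag(x,y)) = α(x)β(y) + α(y)β(x)` for `x ≠ y`,
and `χ = 0` on elliptic elements, i.e. on `z ∈ T'` with `z^p ≠ z`. -/
theorem stmt_17 (hp : Odd p) (b : Basis (Fin 2) (ZMod p) (GaloisField p 2))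
    (V : Type) [AddCommGroup V] [Module (AlgebraicClosure ℚ) V]
    [FiniteDimensional (AlgebraicClosure ℚ) V]
    (ρ : Representation (AlgebraicClosure ℚ) (GL (Fin 2) (ZMod p)) V)
    (α β : (ZMod p)ˣ →* (AlgebraicClosure ℚ)ˣ) (hαβ : α ≠ β)
    (χ : GL (Fin 2) (ZMod p) → AlgebraicClosure ℚ)
    (hχ : ∀ g, χ g = LinearMap.trace (AlgebraicClosure ℚ) V (ρ g))
    (hcent : ∀ x : (ZMod p)ˣ,
      χ (diagGL x x) = ((p : AlgebraicClosure ℚ) + 1) * α x * β x)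
    (hdiag : ∀ x y : (ZMod p)ˣ, x ≠ y →
      χ (diagGL x y) = (α x : AlgebraicClosure ℚ) * β y + (α y : AlgebraicClosure ℚ) * β x)
    (hell : ∀ z : (GaloisField p 2)ˣ, (z : GaloisField p 2) ^ p ≠ z →
      χ (torusHom p b z) = 0) :
    finrank (AlgebraicClosure ℚ)
        (Representation.invariants (ρ.comp (Tsplit p).subtype))
      = (if ∀ x : (ZMod p)ˣ, α x * β x = 1 then 1 else 0) ∧
    finrank (AlgebraicClosure ℚ)
        (Representation.invariants (ρ.comp (Tnonsplit p b).subtype))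
      = (if ∀ x : (ZMod p)ˣ, α x * β x = 1 then 1 else 0) := by
  classical
  -- the delta condition
  have hiff : (∀ x : (ZMod p)ˣ, α x * β x = 1) ↔ (∀ x, ((α x : (AlgebraicClosure ℚ)) * (β x : (AlgebraicClosure ℚ))) = 1) := by
    constructor
    · intro h x
      rw [← Units.val_mul, h x, Units.val_one]
    · intro h x
      exact Units.ext (by rw [Units.val_mul, h x, Units.val_one])
  -- sum of αβ
  have hsumγ : ∑ x : (ZMod p)ˣ, ((α x : (AlgebraicClosure ℚ)) * (β x : (AlgebraicClosure ℚ)))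
      = if (∀ x : (ZMod p)ˣ, α x * β x = 1) then ((p : (AlgebraicClosure ℚ)) - 1) else 0 := by
    have := sum_char p (α * β)
    simp only [MonoidHom.mul_apply, Units.val_mul] at this
    rw [this]
    congr 1
    rw [eq_iff_iff]
    exact Iff.symm hiff
  -- product of the two character sums vanishes
  have hαβ0 : (∑ x : (ZMod p)ˣ, (α x : (AlgebraicClosure ℚ))) * (∑ x : (ZMod p)ˣ, (β x : (AlgebraicClosure ℚ))) = 0 := by
    by_cases hA : ∀ x : (ZMod p)ˣ, ((α x : (AlgebraicClosure ℚ))) = 1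
    · have hBn : ¬ ∀ x : (ZMod p)ˣ, ((β x : (AlgebraicClosure ℚ))) = 1 := by
        intro hB
        exact hαβ (by ext x; exact (hA x).trans (hB x).symm)
      rw [sum_char p β, if_neg hBn, mul_zero]
    · rw [sum_char p α, if_neg hA, zero_mul]
  -- character value on a general diagonal element
  have hval : ∀ x y : (ZMod p)ˣ, χ (diagGL x y)
      = ((α x : (AlgebraicClosure ℚ)) * β y + (α y : (AlgebraicClosure ℚ)) * β x)
        + (if x = y then ((p : (AlgebraicClosure ℚ)) - 1) * ((α x : (AlgebraicClosure ℚ)) * β x) else 0) := by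
    intro x y
    by_cases hxy : x = y
    · subst hxy
      rw [hcent, if_pos rfl]
      ring
    · rw [hdiag _ _ hxy, if_neg hxy, add_zero]
  -- sum over the split torus
  have hS : ∑ h : Tsplit p, LinearMap.trace (AlgebraicClosure ℚ) V ((ρ.comp (Tsplit p).subtype) h)
      = ((p : (AlgebraicClosure ℚ)) - 1) * (if (∀ x : (ZMod p)ˣ, α x * β x = 1) then ((p : (AlgebraicClosure ℚ)) - 1) else 0) := by
    have e1 : ∑ h : Tsplit p, LinearMap.trace (AlgebraicClosure ℚ) V ((ρ.comp (Tsplit p).subtype) h)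
        = ∑ xy : (ZMod p)ˣ × (ZMod p)ˣ, χ (diagGL xy.1 xy.2) := by
      refine (Fintype.sum_equiv (tsplitEquiv p) _ _ ?_).symm
      intro xy
      rw [hχ]
      rfl
    rw [e1]
    calc ∑ xy : (ZMod p)ˣ × (ZMod p)ˣ, χ (diagGL xy.1 xy.2)
        = ∑ x : (ZMod p)ˣ, ∑ y : (ZMod p)ˣ, χ (diagGL x y) := by exact Fintype.sum_prod_type _
      _ = ∑ x : (ZMod p)ˣ, ((α x : AlgebraicClosure ℚ) * (∑ y : (ZMod p)ˣ, (β y : AlgebraicClosure ℚ))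
            + (∑ y : (ZMod p)ˣ, (α y : AlgebraicClosure ℚ)) * (β x : AlgebraicClosure ℚ)
            + ((p : AlgebraicClosure ℚ) - 1) * ((α x : AlgebraicClosure ℚ) * (β x : AlgebraicClosure ℚ))) := by
          refine Finset.sum_congr rfl fun x _ => ?_
          simp_rw [hval x]
          rw [Finset.sum_add_distrib, Finset.sum_add_distrib, ← Finset.mul_sum, ← Finset.sum_mul,
            Finset.sum_ite_eq, if_pos (Finset.mem_univ x)]
      _ = (∑ x : (ZMod p)ˣ, (α x : AlgebraicClosure ℚ)) * (∑ y : (ZMod p)ˣ, (β y : AlgebraicClosure ℚ))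
            + (∑ y : (ZMod p)ˣ, (α y : AlgebraicClosure ℚ)) * (∑ x : (ZMod p)ˣ, (β x : AlgebraicClosure ℚ))
            + ((p : AlgebraicClosure ℚ) - 1) * ∑ x : (ZMod p)ˣ, ((α x : AlgebraicClosure ℚ) * (β x : AlgebraicClosure ℚ)) := by
          rw [Finset.sum_add_distrib, Finset.sum_add_distrib, ← Finset.sum_mul, ← Finset.mul_sum,
            ← Finset.mul_sum]
      _ = ((p : AlgebraicClosure ℚ) - 1) * (if (∀ x : (ZMod p)ˣ, α x * β x = 1) then ((p : AlgebraicClosure ℚ) - 1) else 0) := by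
          rw [hαβ0, hsumγ]; ring
  have hprime : p.Prime := Fact.out
  have hcardT : ((Fintype.card (Tsplit p) : ℕ) : AlgebraicClosure ℚ)
      = ((p : AlgebraicClosure ℚ) - 1) * ((p : AlgebraicClosure ℚ) - 1) := by
    have h1 : Fintype.card (Tsplit p) = (p - 1) * (p - 1) := by
      rw [← Fintype.card_congr (tsplitEquiv p), Fintype.card_prod, ZMod.card_units_eq_totient,
        Nat.totient_prime hprime]
    rw [h1, Nat.cast_mul, Nat.cast_sub hprime.one_le, Nat.cast_one]
  have hsplit : finrank (AlgebraicClosure ℚ)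
      (Representation.invariants (ρ.comp (Tsplit p).subtype))
      = (if ∀ x : (ZMod p)ˣ, α x * β x = 1 then 1 else 0) := by
    have havg := avg_finrank_invariants V (ρ.comp (Tsplit p).subtype)
    rw [hS, smul_eq_mul] at havg
    apply Nat.cast_injective (R := AlgebraicClosure ℚ)
    rw [havg]
    split_ifs with h
    · rw [← hcardT, invOf_mul_self, Nat.cast_one]
    · rw [mul_zero, mul_zero, Nat.cast_zero]
  refine ⟨hsplit, ?_⟩
  -- non-split part
  letI : Fintype (GaloisField p 2) := Fintype.ofFinite _
  letI : Fintype (GaloisField p 2)ˣ := Fintype.ofFinite _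
  set ju : (ZMod p)ˣ →* (GaloisField p 2)ˣ :=
    Units.map (algebraMap (ZMod p) (GaloisField p 2)).toMonoidHom with hju
  have hjuinj : Function.Injective ju :=
    Units.map_injective (algebraMap (ZMod p) (GaloisField p 2)).injective
  have e2 : ∑ h : Tnonsplit p b,
        LinearMap.trace (AlgebraicClosure ℚ) V ((ρ.comp (Tnonsplit p b).subtype) h)
      = ∑ z : (GaloisField p 2)ˣ, χ (torusHom p b z) := by
    exact (Fintype.sum_equiv (tnsEquiv p b)
      (fun z : (GaloisField p 2)ˣ => χ (torusHom p b z))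
      (fun h : Tnonsplit p b =>
        LinearMap.trace (AlgebraicClosure ℚ) V ((ρ.comp (Tnonsplit p b).subtype) h))
      (fun z => by
        show χ (torusHom p b z) = LinearMap.trace (AlgebraicClosure ℚ) V
          ((ρ.comp (Tnonsplit p b).subtype) (tnsEquiv p b z))
        rw [hχ]
        rfl)).symm
  have hfilt : Finset.univ.filter (fun z : (GaloisField p 2)ˣ => ((z : GaloisField p 2))^p = z)
      = Finset.univ.image ju := by
    ext z
    simp only [Finset.mem_filter, Finset.mem_image, Finset.mem_univ, true_and]
    constructor
    · intro hz
      obtain ⟨x, hx⟩ := frob_fixed p z hz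
      have hx0 : x ≠ 0 := by
        intro h0
        rw [h0, map_zero] at hx
        exact z.ne_zero hx.symm
      refine ⟨Units.mk0 x hx0, Units.ext ?_⟩
      exact hx
    · rintro ⟨u, rfl⟩
      show ((ju u : (GaloisField p 2)ˣ) : GaloisField p 2) ^ p = _
      rw [hju]
      show (algebraMap (ZMod p) (GaloisField p 2) u) ^ p = algebraMap (ZMod p) (GaloisField p 2) u
      rw [← map_pow, ZMod.pow_card]
  have hS' : ∑ z : (GaloisField p 2)ˣ, χ (torusHom p b z)
      = ((p : AlgebraicClosure ℚ) + 1) *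
        (if (∀ x : (ZMod p)ˣ, α x * β x = 1) then ((p : AlgebraicClosure ℚ) - 1) else 0) := by
    rw [← Finset.sum_filter_of_ne (p := fun z : (GaloisField p 2)ˣ => ((z : GaloisField p 2))^p = z)
      (fun z _ hne => by by_contra h; exact hne (hell z h)), hfilt,
      Finset.sum_image (fun x _ y _ h => hjuinj h)]
    have : ∀ x : (ZMod p)ˣ, χ (torusHom p b (ju x))
        = ((p : AlgebraicClosure ℚ) + 1) * ((α x : AlgebraicClosure ℚ) * (β x : AlgebraicClosure ℚ)) := by
      intro x
      rw [hju]
      rw [torusHom_scalar p b x, hcent x, mul_assoc]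
    simp_rw [this]
    rw [← Finset.mul_sum, hsumγ]
  have hcardT' : ((Fintype.card (Tnonsplit p b) : ℕ) : AlgebraicClosure ℚ)
      = ((p : AlgebraicClosure ℚ) + 1) * ((p : AlgebraicClosure ℚ) - 1) := by
    have h3 : Nat.card (GaloisField p 2)ˣ = p ^ 2 - 1 := by
      rw [Nat.card_units, GaloisField.card p 2 (by norm_num)]
    have h1 : Fintype.card (Tnonsplit p b) = p ^ 2 - 1 := by
      rw [← Nat.card_eq_fintype_card, Nat.card_congr (tnsEquiv p b).symm, h3]
    rw [h1, Nat.cast_sub (Nat.one_le_pow _ _ hprime.pos), Nat.cast_pow, Nat.cast_one]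
    ring
  have havg := avg_finrank_invariants V (ρ.comp (Tnonsplit p b).subtype)
  rw [e2, hS', smul_eq_mul] at havg
  apply Nat.cast_injective (R := AlgebraicClosure ℚ)
  rw [havg]
  split_ifs with h
  · rw [← hcardT', invOf_mul_self, Nat.cast_one]
  · rw [mul_zero, mul_zero, Nat.cast_zero]
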